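/- Let U ⊆ ℝ^n be open, f : U → ℝ^m be C¹ with m ≥ n, and let E ⊆ U be a closed Lebesgue-null set. Then the set of 'S-singular values' of f, namely f(E) ∪ {f(x) : x ∈ U \ E, Df(x) is not injective}, is Lebesgue-null in ℝ^m. -/

import Mathlib

open MeasureTheory Set ENNReal
noncomputable section

abbrev E (n : ℕ) := EuclideanSpace ℝ (Fin n)

theorem stmt19 (n m : ℕ) (hnm : n ≤ m) (U : Set (E n)) (hU : IsOpen U)
    (f : E n → E m) (hf : ContDiffOn ℝ 1 f U)
    (Eset : Set (E n)) (hEU : Eset ⊆ U) (hEc : IsClosed Eset)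
    (hEnull : volume Eset = 0) :
    volume (f '' Eset ∪
      f '' {x ∈ U \ Eset | ¬ Function.Injective (fderiv ℝ f x)}) = 0 := by
  have hdiffAt : ∀ x ∈ U, DifferentiableAt ℝ f x := fun x hx =>
    (hf.contDiffAt (hU.mem_nhds hx)).differentiableAt one_ne_zero
  rcases hnm.lt_or_eq with hlt | rfl
  · -- n < m : the whole image f '' U is null
    apply measure_mono_null
      (union_subset (image_mono (f := f) hEU) (image_mono (f := f) fun x hx => hx.1.1))
    -- projection π : E m → E n
    set π : E m →L[ℝ] E n :=
      LinearMap.toContinuousLinearMap (((WithLp.linearEquiv 2 ℝ (Fin n → ℝ)).symm.toLinearMap.comp (LinearMap.funLeft ℝ ℝ (Fin.castLE hnm))).comp (WithLp.linearEquiv 2 ℝ (Fin m → ℝ)).toLinearMap) with hπ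
    have hπ_surj : Function.Surjective π := by
      intro x
      refine ⟨WithLp.toLp 2 (fun i : Fin m => if h : (i : ℕ) < n then x ⟨i, h⟩ else 0), ?_⟩
      ext i
      simp [hπ, LinearMap.funLeft, i.2]
    set g : E m → E m := f ∘ π with hg
    have hsub : f '' U ⊆ g '' (π ⁻¹' U) := by
      rintro _ ⟨x, hx, rfl⟩
      obtain ⟨z, rfl⟩ := hπ_surj x
      exact ⟨z, hx, rfl⟩
    apply measure_mono_null hsub
    apply addHaar_image_eq_zero_of_det_fderivWithin_eq_zero volume
      (f' := fun x => (fderiv ℝ f (π x)).comp π)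
    · intro x hx
      exact (((hdiffAt _ hx).hasFDerivAt.comp x π.hasFDerivAt)).hasFDerivWithinAt
    · intro x hx
      set A := fderiv ℝ f (π x)
      by_contra hdet
      have hsurj : Function.Surjective (A.comp π) :=
        (LinearMap.equivOfDetNeZero _ hdet).surjective
      have h1 : LinearMap.range ((A : E n →ₗ[ℝ] E m).comp (π : E m →ₗ[ℝ] E n)) = ⊤ :=
        LinearMap.range_eq_top.2 hsurj
      have h2 : LinearMap.range ((A : E n →ₗ[ℝ] E m).comp (π : E m →ₗ[ℝ] E n))
          ≤ LinearMap.range (A : E n →ₗ[ℝ] E m) := by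
        rw [LinearMap.range_comp]
        exact LinearMap.map_le_range
      rw [h1, top_le_iff] at h2
      have h3 := LinearMap.finrank_range_le (A : E n →ₗ[ℝ] E m)
      rw [h2] at h3
      simp only [finrank_top, finrank_euclideanSpace_fin] at h3
      omega
  · -- n = m
    apply measure_union_null
    · exact addHaar_image_eq_zero_of_differentiableOn_of_addHaar_eq_zero volume
        ((hf.differentiableOn one_ne_zero).mono hEU) hEnull
    · apply addHaar_image_eq_zero_of_det_fderivWithin_eq_zero volume
        (f' := fun x => fderiv ℝ f x)
      · intro x hx
        exact (hdiffAt x hx.1.1).hasFDerivAt.hasFDerivWithinAt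
      · intro x hx
        by_contra hdet
        exact hx.2 (LinearMap.equivOfDetNeZero _ hdet).injective
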